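/- arXiv:1106.5413 — 5 statements merged into one kernel-verified Lean document; each statement's English description precedes it below -/
import Mathlib

section
/- Let A ∈ R^{m×n}, b ∈ R^m, μ > 0, and define G_μ(y) = -min_w { ‖w‖₁ + (1/(2μ))‖w‖² - ⟨y, Aw - b⟩ }. Then G_μ is differentiable with ∇G_μ(y) = A w*(y) - b where w*(y) = μ·shrink(Aᵀy, 1), and ∇G_μ is Lipschitz continuous with Lipschitz constant at most μ‖A‖², where ‖A‖ is the operator (spectral) norm of A. -/
open scoped RealInnerProductSpace

abbrev E (n : ℕ) := EuclideanSpace ℝ (Fin n)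

noncomputable def shrink {n : ℕ} (α : ℝ) (z : E n) : E n :=
  WithLp.toLp 2 (fun i => Real.sign (z i) * max (|z i| - α) 0)

noncomputable def ss (a : ℝ) : ℝ := Real.sign a * max (|a| - 1) 0

lemma ss_eq_clamp (a : ℝ) : ss a = a - max (-1) (min a 1) := by
  unfold ss
  rcases lt_trichotomy a 0 with h | h | h
  · rw [Real.sign_of_neg h, abs_of_neg h]
    simp only [max_def, min_def]; split_ifs <;> linarith
  · simp [h]
  · rw [Real.sign_of_pos h, abs_of_pos h]
    simp only [max_def, min_def]; split_ifs <;> linarith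

lemma ss_lipschitz (a c : ℝ) : |ss a - ss c| ≤ |a - c| := by
  wlog h : c ≤ a generalizing a c
  · rw [abs_sub_comm, abs_sub_comm a c]; exact this _ _ (le_of_not_ge h)
  rw [ss_eq_clamp, ss_eq_clamp]
  have h1 : max (-1) (min c 1) ≤ max (-1) (min a 1) :=
    max_le_max le_rfl (min_le_min h le_rfl)
  have h2 : max (-1) (min a 1) - max (-1) (min c 1) ≤ a - c := by
    simp only [max_def, min_def]; split_ifs <;> linarith
  rw [abs_of_nonneg (by linarith), abs_of_nonneg (by linarith)]
  linarith

lemma coord_min {μ : ℝ} (hμ : 0 < μ) (a w : ℝ) :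
    |μ * ss a| + 1 / (2 * μ) * (μ * ss a) ^ 2 - a * (μ * ss a) ≤
      |w| + 1 / (2 * μ) * w ^ 2 - a * w := by
  have key : |μ * ss a| + 1 / (2 * μ) * (μ * ss a) ^ 2 - a * (μ * ss a)
      = -(μ / 2) * (ss a) ^ 2 := by
    unfold ss
    rcases lt_trichotomy a 0 with h | h | h
    · rw [Real.sign_of_neg h, abs_of_neg h]
      rcases le_total (-a) 1 with h1 | h1
      · rw [max_eq_right (by linarith)]; norm_num
      · rw [max_eq_left (by linarith)]
        have e : μ * (-1 * (-a - 1)) = -(μ * (-a - 1)) := by ring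
        rw [e, abs_neg, abs_of_nonneg (by nlinarith)]
        field_simp; ring
    · simp [h]
    · rw [Real.sign_of_pos h, abs_of_pos h]
      rcases le_total a 1 with h1 | h1
      · rw [max_eq_right (by linarith)]; norm_num
      · rw [max_eq_left (by linarith)]
        have e : μ * (1 * (a - 1)) = μ * (a - 1) := by ring
        rw [e, abs_of_nonneg (by nlinarith)]
        field_simp; ring
  rw [key]
  have haw : a * w ≤ |a| * |w| := by rw [← abs_mul]; exact le_abs_self _
  have hw0 : 0 ≤ |w| := abs_nonneg w
  have hs2 : (ss a) ^ 2 = (max (|a| - 1) 0) ^ 2 := by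
    unfold ss
    rcases lt_trichotomy a 0 with h | h | h
    · rw [Real.sign_of_neg h]; ring
    · simp [h]
    · rw [Real.sign_of_pos h]; ring
  rw [hs2]
  have h2μ : (0:ℝ) < 2 * μ := by linarith
  have hpos : (0:ℝ) ≤ 1 / (2 * μ) := by positivity
  rcases le_total (|a|) 1 with h1 | h1
  · rw [max_eq_right (by linarith)]
    have h3 : a * w ≤ |w| := le_trans haw (by nlinarith)
    have h4 : 0 ≤ 1 / (2 * μ) * w ^ 2 := by positivity
    nlinarith
  · rw [max_eq_left (by linarith)]
    have key2 : 0 ≤ (|w| - μ * (|a| - 1)) ^ 2 := sq_nonneg _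
    have hinner : 0 ≤ (2*μ)*|w| + w^2 - (2*μ)*(a*w) + μ^2*(|a|-1)^2 := by
      nlinarith [key2, sq_abs w, mul_le_mul_of_nonneg_left haw (le_of_lt h2μ)]
    have expand : |w| + 1/(2*μ)*w^2 - a*w + (μ/2)*(|a|-1)^2
        = 1/(2*μ) * ((2*μ)*|w| + w^2 - (2*μ)*(a*w) + μ^2*(|a|-1)^2) := by
      field_simp
    have h5 : 0 ≤ |w| + 1/(2*μ)*w^2 - a*w + (μ/2)*(|a|-1)^2 :=
      expand ▸ mul_nonneg hpos hinner
    linarith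

lemma euc_norm_le {n : ℕ} (u v : E n) (h : ∀ i, |u i| ≤ |v i|) : ‖u‖ ≤ ‖v‖ := by
  rw [EuclideanSpace.norm_eq, EuclideanSpace.norm_eq]
  apply Real.sqrt_le_sqrt
  apply Finset.sum_le_sum
  intro i _
  simp only [Real.norm_eq_abs]
  exact pow_le_pow_left₀ (abs_nonneg _) (h i) 2

noncomputable def Fobj {m n : ℕ} (A : E n →L[ℝ] E m) (b : E m) (μ : ℝ)
    (y : E m) (w : E n) : ℝ :=
  (∑ i, |w i|) + (1 / (2 * μ)) * ‖w‖ ^ 2 - ⟪y, A w - b⟫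

lemma Fobj_eq {m n : ℕ} (A : E n →L[ℝ] E m) (b : E m) (μ : ℝ) (y : E m) (w : E n) :
    Fobj A b μ y w
      = (∑ i, (|w i| + 1 / (2 * μ) * (w i) ^ 2
          - ((ContinuousLinearMap.adjoint A) y) i * w i)) + ⟪y, b⟫ := by
  unfold Fobj
  have hn : ‖w‖ ^ 2 = ∑ i, (w i) ^ 2 := by
    rw [EuclideanSpace.norm_eq, Real.sq_sqrt (Finset.sum_nonneg fun i _ => sq_nonneg _)]
    simp [Real.norm_eq_abs, sq_abs]
  have hi : ⟪y, A w - b⟫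
      = (∑ i, ((ContinuousLinearMap.adjoint A) y) i * w i) - ⟪y, b⟫ := by
    rw [inner_sub_right, ← ContinuousLinearMap.adjoint_inner_left]
    simp [PiLp.inner_apply, RCLike.inner_apply, starRingEnd_apply]
    exact Finset.sum_congr rfl fun i _ => mul_comm _ _
  rw [hn, hi, Finset.sum_sub_distrib, Finset.sum_add_distrib, Finset.mul_sum]
  ring

theorem dual_gradient_and_lipschitz {m n : ℕ}
    (A : E n →L[ℝ] E m) (b : E m) (μ : ℝ) (hμ : 0 < μ)
    (G : E m → ℝ)
    (hG : ∀ y, G y = -(⨅ w : E n,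
      (∑ i, |w i|) + (1 / (2 * μ)) * ‖w‖ ^ 2 - ⟪y, A w - b⟫))
    (wstar : E m → E n)
    (hw : ∀ y, wstar y = μ • shrink 1 ((ContinuousLinearMap.adjoint A) y)) :
    (∀ y, HasGradientAt G (A (wstar y) - b) y) ∧
    (∀ y₁ y₂ : E m,
      ‖(A (wstar y₁) - b) - (A (wstar y₂) - b)‖ ≤ μ * ‖A‖ ^ 2 * ‖y₁ - y₂‖) := by
  have hws : ∀ (y : E m) (i : Fin n),
      wstar y i = μ * ss ((ContinuousLinearMap.adjoint A) y i) := by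
    intro y i
    rw [hw, PiLp.smul_apply, smul_eq_mul]
    rfl
  have hmin : ∀ (y : E m) (w : E n), Fobj A b μ y (wstar y) ≤ Fobj A b μ y w := by
    intro y w
    rw [Fobj_eq, Fobj_eq]
    refine add_le_add_left (Finset.sum_le_sum fun i _ => ?_) _
    rw [hws]
    exact coord_min hμ _ _
  have hbdd : ∀ y : E m, BddBelow (Set.range (Fobj A b μ y)) := fun y =>
    ⟨Fobj A b μ y (wstar y), by rintro _ ⟨w, rfl⟩; exact hmin y w⟩
  have hGv : ∀ y, G y = -(Fobj A b μ y (wstar y)) := by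
    intro y
    rw [hG y]
    have : (⨅ w : E n, Fobj A b μ y w) = Fobj A b μ y (wstar y) :=
      le_antisymm (ciInf_le (hbdd y) (wstar y)) (le_ciInf (hmin y))
    exact congrArg Neg.neg this
  have haffine : ∀ (y y' : E m) (w : E n),
      Fobj A b μ y' w = Fobj A b μ y w - ⟪y' - y, A w - b⟫ := by
    intro y y' w
    unfold Fobj
    rw [inner_sub_left]
    ring
  have key_ineq : ∀ y y' : E m, G y + ⟪A (wstar y) - b, y' - y⟫ ≤ G y' := by
    intro y y'
    rw [hGv y, hGv y']
    have h1 : Fobj A b μ y' (wstar y') ≤ Fobj A b μ y' (wstar y) := hmin y' (wstar y)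
    have h2 : Fobj A b μ y' (wstar y)
        = Fobj A b μ y (wstar y) - ⟪y' - y, A (wstar y) - b⟫ := haffine y y' _
    have h3 : ⟪A (wstar y) - b, y' - y⟫ = ⟪y' - y, A (wstar y) - b⟫ := real_inner_comm _ _
    linarith
  have hA' : ‖ContinuousLinearMap.adjoint A‖ = ‖A‖ :=
    (ContinuousLinearMap.adjoint : (E n →L[ℝ] E m) ≃ₗᵢ⋆[ℝ] _).norm_map A
  have hLipA : ∀ y₁ y₂ : E m,
      ‖A (wstar y₁) - A (wstar y₂)‖ ≤ μ * ‖A‖ ^ 2 * ‖y₁ - y₂‖ := by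
    intro y₁ y₂
    have h1 : ‖wstar y₁ - wstar y₂‖
        ≤ μ * ‖(ContinuousLinearMap.adjoint A) y₁ - (ContinuousLinearMap.adjoint A) y₂‖ := by
      have hcoord : ∀ i, |(wstar y₁ - wstar y₂) i|
          ≤ |(μ • ((ContinuousLinearMap.adjoint A) y₁ - (ContinuousLinearMap.adjoint A) y₂)) i| := by
        intro i
        simp only [PiLp.sub_apply, PiLp.smul_apply, hws, smul_eq_mul]
        rw [← mul_sub, abs_mul, abs_mul, abs_of_pos hμ]
        exact mul_le_mul_of_nonneg_left (ss_lipschitz _ _) hμ.le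
      have := euc_norm_le _ _ hcoord
      rwa [norm_smul, Real.norm_eq_abs, abs_of_pos hμ] at this
    have h2 : ‖(ContinuousLinearMap.adjoint A) y₁ - (ContinuousLinearMap.adjoint A) y₂‖
        ≤ ‖A‖ * ‖y₁ - y₂‖ := by
      rw [← map_sub, ← hA']
      exact (ContinuousLinearMap.adjoint A).le_opNorm _
    have h3 : ‖A (wstar y₁) - A (wstar y₂)‖ ≤ ‖A‖ * ‖wstar y₁ - wstar y₂‖ := by
      rw [← map_sub]
      exact A.le_opNorm _
    have hA0 : (0:ℝ) ≤ ‖A‖ := norm_nonneg _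
    calc ‖A (wstar y₁) - A (wstar y₂)‖ ≤ ‖A‖ * ‖wstar y₁ - wstar y₂‖ := h3
      _ ≤ ‖A‖ * (μ * ‖(ContinuousLinearMap.adjoint A) y₁ - (ContinuousLinearMap.adjoint A) y₂‖) :=
          mul_le_mul_of_nonneg_left h1 hA0
      _ ≤ ‖A‖ * (μ * (‖A‖ * ‖y₁ - y₂‖)) := by
          apply mul_le_mul_of_nonneg_left _ hA0
          exact mul_le_mul_of_nonneg_left h2 hμ.le
      _ = μ * ‖A‖ ^ 2 * ‖y₁ - y₂‖ := by ring
  constructor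
  · intro y
    rw [hasGradientAt_iff_hasFDerivAt, hasFDerivAt_iff_isLittleO_nhds_zero,
      Asymptotics.isLittleO_iff]
    set K := μ * ‖A‖ ^ 2 with hKdef
    have hK0 : (0:ℝ) ≤ K := by positivity
    have hbound : ∀ h : E m,
        ‖G (y + h) - G y - (InnerProductSpace.toDual ℝ (E m) (A (wstar y) - b)) h‖
          ≤ K * ‖h‖ ^ 2 := by
      intro h
      simp only [InnerProductSpace.toDual_apply_apply]
      have low := key_ineq y (y + h)
      rw [add_sub_cancel_left] at low
      have upper := key_ineq (y + h) y
      have e : y - (y + h) = -h := by abel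
      rw [e, inner_neg_right] at upper
      have hgg : ⟪(A (wstar (y + h)) - b) - (A (wstar y) - b), h⟫ ≤ K * ‖h‖ ^ 2 := by
        have i1 := real_inner_le_norm ((A (wstar (y + h)) - b) - (A (wstar y) - b)) h
        have i2 : ‖(A (wstar (y + h)) - b) - (A (wstar y) - b)‖ ≤ K * ‖h‖ := by
          rw [sub_sub_sub_cancel_right]
          have := hLipA (y + h) y
          rwa [add_sub_cancel_left] at this
        nlinarith [norm_nonneg h, norm_nonneg ((A (wstar (y + h)) - b) - (A (wstar y) - b))]
      have expand : ⟪(A (wstar (y + h)) - b) - (A (wstar y) - b), h⟫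
          = ⟪A (wstar (y + h)) - b, h⟫ - ⟪A (wstar y) - b, h⟫ := inner_sub_left _ _ _
      have err_nonneg : 0 ≤ G (y + h) - G y - ⟪A (wstar y) - b, h⟫ := by linarith
      have err_le : G (y + h) - G y - ⟪A (wstar y) - b, h⟫ ≤ K * ‖h‖ ^ 2 := by linarith
      rw [Real.norm_eq_abs, abs_of_nonneg err_nonneg]
      exact err_le
    intro c hc
    filter_upwards [Metric.ball_mem_nhds (0 : E m)
      (show (0:ℝ) < c / (K + 1) by positivity)] with h hh
    rw [Metric.mem_ball, dist_zero_right] at hh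
    have h4 : ‖h‖ * (K + 1) < c := (lt_div_iff₀ (by positivity)).mp hh
    calc ‖G (y + h) - G y - (InnerProductSpace.toDual ℝ (E m) (A (wstar y) - b)) h‖
        ≤ K * ‖h‖ ^ 2 := hbound h
      _ ≤ c * ‖h‖ := by nlinarith [norm_nonneg h]
  · intro y₁ y₂
    rw [sub_sub_sub_cancel_right]
    exact hLipA y₁ y₂
end

section
/- Let J : R^n → R be convex, A ∈ R^{m×n}, b ∈ R^m. The Bregman iterative method starting from x⁰ = p⁰ = 0, with x^{k+1} = argmin_x { J(x) - J(x^k) - ⟨p^k, x - x^k⟩ + (1/2)‖Ax - b‖² } and p^{k+1} = p^k - Aᵀ(Ax^{k+1} - b), generates exactly the same sequence {x^k} as the augmented Lagrangian method x^{k+1} = argmin_x { J(x) - ⟨λ^k, Ax - b⟩ + (1/2)‖Ax - b‖² }, λ^{k+1} = λ^k - (Ax^{k+1} - b), starting from λ⁰ = 0; moreover p^k = Aᵀλ^k for all k. -/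
open scoped RealInnerProductSpace

theorem bregman_eq_augmented_lagrangian {m n : ℕ}
    (J : E n → ℝ) (hJ : ConvexOn ℝ Set.univ J)
    (A : E n →L[ℝ] E m) (b : E m)
    (x xa p : ℕ → E n) (lam : ℕ → E m)
    (hx0 : x 0 = 0) (hp0 : p 0 = 0) (hxa0 : xa 0 = 0) (hlam0 : lam 0 = 0)
    (hxmin : ∀ k, ∀ z : E n,
      J (x (k + 1)) - J (x k) - ⟪p k, x (k + 1) - x k⟫ +
          (1 / 2) * ‖A (x (k + 1)) - b‖ ^ 2 ≤
        J z - J (x k) - ⟪p k, z - x k⟫ + (1 / 2) * ‖A z - b‖ ^ 2)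
    (hxuniq : ∀ k, ∀ z : E n,
      (∀ u : E n,
        J z - J (x k) - ⟪p k, z - x k⟫ + (1 / 2) * ‖A z - b‖ ^ 2 ≤
          J u - J (x k) - ⟪p k, u - x k⟫ + (1 / 2) * ‖A u - b‖ ^ 2) →
      z = x (k + 1))
    (hp : ∀ k, p (k + 1) = p k - (ContinuousLinearMap.adjoint A) (A (x (k + 1)) - b))
    (hxamin : ∀ k, ∀ z : E n,
      J (xa (k + 1)) - ⟪lam k, A (xa (k + 1)) - b⟫ +
          (1 / 2) * ‖A (xa (k + 1)) - b‖ ^ 2 ≤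
        J z - ⟪lam k, A z - b⟫ + (1 / 2) * ‖A z - b‖ ^ 2)
    (hlam : ∀ k, lam (k + 1) = lam k - (A (xa (k + 1)) - b)) :
    ∀ k, x k = xa k ∧ p k = (ContinuousLinearMap.adjoint A) (lam k) := by
  intro k
  induction k with
  | zero => simp [hx0, hxa0, hp0, hlam0]
  | succ k ih =>
    obtain ⟨hxk, hpk⟩ := ih
    have key : ∀ z : E n,
        J z - J (x k) - ⟪p k, z - x k⟫ + (1 / 2) * ‖A z - b‖ ^ 2
          = (J z - ⟪lam k, A z - b⟫ + (1 / 2) * ‖A z - b‖ ^ 2)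
            - J (x k) + ⟪p k, x k⟫ - ⟪lam k, b⟫ := by
      intro z
      have h1 : ⟪p k, z - x k⟫ = ⟪lam k, A z⟫ - ⟪p k, x k⟫ := by
        rw [inner_sub_right]
        congr 1
        rw [hpk, ContinuousLinearMap.adjoint_inner_left]
      have h2 : ⟪lam k, A z - b⟫ = ⟪lam k, A z⟫ - ⟪lam k, b⟫ := inner_sub_right _ _ _
      rw [h1, h2]; ring
    have hxe : xa (k + 1) = x (k + 1) := by
      apply hxuniq k
      intro u
      rw [key (xa (k + 1)), key u]
      linarith [hxamin k u]
    refine ⟨hxe.symm, ?_⟩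
    rw [hp k, hlam k, hpk, hxe]; simp [map_sub]
end

section
/- Let G : R^m → R be convex and differentiable with L-Lipschitz gradient and minimizer y*, let 0 < τ ≤ 1/L, and let θ_k = 2/(k+2), α_k = 1 + θ_{k+1}(θ_k^{-1} - 1). Then the accelerated gradient iterates defined by y^{k+1} = ỹ^k - τ∇G(ỹ^k), ỹ^{k+1} = α_k y^{k+1} + (1 - α_k)y^k, starting from ỹ⁰ = y⁰, satisfy G(y^k) - G(y*) ≤ 2‖y* - y⁰‖²/(τ k²) for all k ≥ 1. -/
open InnerProductSpace

lemma line_deriv {m : ℕ} (G : E m → ℝ) (g : E m → E m)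
    (hgrad : ∀ y, HasGradientAt G (g y) y) (x z : E m) (t : ℝ) :
    HasDerivAt (fun t : ℝ => G (x + t • (z - x)))
      (inner ℝ (g (x + t • (z - x))) (z - x) : ℝ) t := by
  have hc : HasDerivAt (fun t : ℝ => x + t • (z - x)) (z - x) t := by
    simpa using ((hasDerivAt_id t).smul_const (z - x)).const_add x
  have := (hgrad (x + t • (z - x))).hasFDerivAt.comp_hasDerivAt t hc
  exact this

-- convexity gradient inequality
lemma conv_grad {m : ℕ} (G : E m → ℝ) (g : E m → E m)
    (hconv : ConvexOn ℝ Set.univ G)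
    (hgrad : ∀ y, HasGradientAt G (g y) y) (x z : E m) :
    G x + (inner ℝ (g x) (z - x) : ℝ) ≤ G z := by
  set φ : ℝ → ℝ := fun t => G (x + t • (z - x)) with hφ
  have hd : HasDerivAt φ (inner ℝ (g x) (z - x) : ℝ) 0 := by
    simpa using line_deriv G g hgrad x z 0
  have hslope : Filter.Tendsto (slope φ 0) (nhdsWithin 0 (Set.Ioi 0))
      (nhds (inner ℝ (g x) (z - x) : ℝ)) := by
    have := hasDerivAt_iff_tendsto_slope.mp hd
    exact this.mono_left (nhdsWithin_mono 0 (by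
      intro t ht; exact fun h => (ne_of_gt (Set.mem_Ioi.mp ht)) (by simpa using h)))
  have hboundev : ∀ᶠ t in nhdsWithin 0 (Set.Ioi 0), slope φ 0 t ≤ G z - G x := by
    filter_upwards [Ioc_mem_nhdsGT_of_mem (by norm_num : (0:ℝ) ∈ Set.Ico 0 1)] with t ht
    obtain ⟨ht0, ht1⟩ := ht
    have key : φ t ≤ (1 - t) * G x + t * G z := by
      have := hconv.2 (Set.mem_univ x) (Set.mem_univ z) (by linarith : (0:ℝ) ≤ 1 - t)
        (le_of_lt ht0) (by ring)
      have hx : (1 - t) • x + t • z = x + t • (z - x) := by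
        module
      simpa [hφ, hx] using this
    rw [slope_def_field, div_le_iff₀ (by simpa using ht0)]
    have : φ 0 = G x := by simp [hφ]
    rw [this]
    nlinarith [key]
  have := le_of_tendsto hslope hboundev
  linarith [this]

lemma descent_lemma {m : ℕ} (G : E m → ℝ) (g : E m → E m) (L : ℝ)
    (hgrad : ∀ y, HasGradientAt G (g y) y)
    (hlip : ∀ y₁ y₂ : E m, ‖g y₁ - g y₂‖ ≤ L * ‖y₁ - y₂‖)
    (hL : 0 ≤ L) (x z : E m) :
    G z ≤ G x + (inner ℝ (g x) (z - x) : ℝ) + L / 2 * ‖z - x‖ ^ 2 := by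
  set ψ : ℝ → ℝ := fun t =>
    G (x + t • (z - x)) - t * (inner ℝ (g x) (z - x) : ℝ) - L / 2 * t ^ 2 * ‖z - x‖ ^ 2 with hψ
  have hder : ∀ t : ℝ, HasDerivAt ψ
      ((inner ℝ (g (x + t • (z - x))) (z - x) : ℝ) - (inner ℝ (g x) (z - x) : ℝ)
        - L * t * ‖z - x‖ ^ 2) t := by
    intro t
    have h1 := line_deriv G g hgrad x z t
    have h2 : HasDerivAt (fun t : ℝ => t * (inner ℝ (g x) (z - x) : ℝ))
        ((inner ℝ (g x) (z - x) : ℝ)) t := by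
      simpa using (hasDerivAt_id t).mul_const (inner ℝ (g x) (z - x) : ℝ)
    have h3 : HasDerivAt (fun t : ℝ => L / 2 * t ^ 2 * ‖z - x‖ ^ 2)
        (L * t * ‖z - x‖ ^ 2) t := by
      have := ((hasDerivAt_pow 2 t).const_mul (L / 2)).mul_const (‖z - x‖ ^ 2)
      exact this.congr_deriv (by rw [show (2:ℕ) - 1 = 1 from rfl]; push_cast; ring)
    exact (h1.sub h2).sub h3
  have hanti : AntitoneOn ψ (Set.Icc 0 1) := by
    apply antitoneOn_of_deriv_nonpos (convex_Icc 0 1)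
    · exact fun t _ => ((hder t).differentiableAt.continuousAt).continuousWithinAt
    · exact fun t _ => (hder t).differentiableAt.differentiableWithinAt
    · intro t ht
      rw [interior_Icc] at ht
      rw [(hder t).deriv]
      have hinner : (inner ℝ (g (x + t • (z - x)) - g x) (z - x) : ℝ)
          ≤ ‖g (x + t • (z - x)) - g x‖ * ‖z - x‖ := real_inner_le_norm _ _
      have hlipb : ‖g (x + t • (z - x)) - g x‖ ≤ L * (t * ‖z - x‖) := by
        have := hlip (x + t • (z - x)) x
        simpa [norm_smul, abs_of_pos ht.1, mul_assoc] using this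
      have hzx : (0:ℝ) ≤ ‖z - x‖ := norm_nonneg _
      have := inner_sub_left (𝕜 := ℝ) (g (x + t • (z - x))) (g x) (z - x)
      nlinarith [hinner, hlipb, mul_le_mul_of_nonneg_right hlipb hzx]
  have := hanti (Set.left_mem_Icc.mpr zero_le_one) (Set.right_mem_Icc.mpr zero_le_one)
    zero_le_one
  simp only [hψ] at this
  have hxz : x + (1:ℝ) • (z - x) = z := by
    rw [one_smul]; abel
  have hxz0 : x + (0:ℝ) • (z - x) = x := by
    rw [zero_smul, add_zero]
  rw [hxz, hxz0] at this
  nlinarith [this]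

lemma key_step {m : ℕ} (G : E m → ℝ) (g : E m → E m) (L τ : ℝ)
    (hconv : ConvexOn ℝ Set.univ G)
    (hgrad : ∀ y, HasGradientAt G (g y) y)
    (hlip : ∀ y₁ y₂ : E m, ‖g y₁ - g y₂‖ ≤ L * ‖y₁ - y₂‖)
    (hτ0 : 0 < τ) (hτL : τ * L ≤ 1) (hL : 0 ≤ L) (x z : E m) :
    G (x - τ • g x) ≤ G z + 1 / (2 * τ) * (‖x - z‖ ^ 2 - ‖x - τ • g x - z‖ ^ 2) := by
  have h1 := descent_lemma G g L hgrad hlip hL x (x - τ • g x)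
  have h2 := conv_grad G g hconv hgrad x z
  have e1 : x - τ • g x - x = -(τ • g x) := by abel
  have e2 : (inner ℝ (g x) (-(τ • g x)) : ℝ) = -(τ * ‖g x‖ ^ 2) := by
    rw [inner_neg_right, real_inner_smul_right, real_inner_self_eq_norm_sq]
  have e3 : ‖x - τ • g x - x‖ ^ 2 = τ ^ 2 * ‖g x‖ ^ 2 := by
    rw [e1, norm_neg, norm_smul, mul_pow]
    simp [abs_of_pos hτ0, sq_abs]
  rw [e1, e2] at h1
  rw [e1] at e3
  -- norm identity
  have e4 : ‖x - τ • g x - z‖ ^ 2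
      = ‖x - z‖ ^ 2 - 2 * τ * (inner ℝ (g x) (x - z) : ℝ) + τ ^ 2 * ‖g x‖ ^ 2 := by
    have : x - τ • g x - z = (x - z) - τ • g x := by abel
    rw [this, norm_sub_sq_real, real_inner_smul_right, norm_smul, mul_pow]
    rw [real_inner_comm]
    simp [abs_of_pos hτ0, sq_abs]
    ring
  have e5 : (inner ℝ (g x) (z - x) : ℝ) = -(inner ℝ (g x) (x - z) : ℝ) := by
    rw [← inner_neg_right]; congr 1; abel
  rw [e5] at h2
  have hτg : L / 2 * (τ ^ 2 * ‖g x‖ ^ 2) ≤ τ / 2 * ‖g x‖ ^ 2 := by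
    nlinarith [sq_nonneg ‖g x‖, hτ0.le]
  rw [e3] at h1
  rw [e4]
  have hD : 1 / (2 * τ) * (‖x - z‖ ^ 2
      - (‖x - z‖ ^ 2 - 2 * τ * (inner ℝ (g x) (x - z) : ℝ) + τ ^ 2 * ‖g x‖ ^ 2))
      = (inner ℝ (g x) (x - z) : ℝ) - τ / 2 * ‖g x‖ ^ 2 := by
    field_simp
    ring
  rw [hD]
  linarith [h1, h2, hτg]

set_option maxHeartbeats 2000000 in
theorem accelerated_gradient_complexity {m : ℕ}
    (G : E m → ℝ) (g : E m → E m) (L τ : ℝ)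
    (hconv : ConvexOn ℝ Set.univ G)
    (hgrad : ∀ y, HasGradientAt G (g y) y)
    (hlip : ∀ y₁ y₂ : E m, ‖g y₁ - g y₂‖ ≤ L * ‖y₁ - y₂‖)
    (ystar : E m) (hmin : ∀ y, G ystar ≤ G y)
    (hτ0 : 0 < τ) (hτ : τ ≤ 1 / L)
    (θ α : ℕ → ℝ)
    (hθ : ∀ k : ℕ, θ k = 2 / ((k : ℝ) + 2))
    (hα : ∀ k : ℕ, α k = 1 + θ (k + 1) * ((θ k)⁻¹ - 1))
    (y ty : ℕ → E m) (h0 : ty 0 = y 0)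
    (hy : ∀ k, y (k + 1) = ty k - τ • g (ty k))
    (hty : ∀ k, ty (k + 1) = α k • y (k + 1) + (1 - α k) • y k) :
    ∀ k : ℕ, 1 ≤ k →
      G (y k) - G ystar ≤ 2 * ‖ystar - y 0‖ ^ 2 / (τ * (k : ℝ) ^ 2) := by
  -- L is positive
  have hL : 0 < L := by
    by_contra h
    push_neg at h
    have : 1 / L ≤ 0 := one_div_nonpos.mpr h
    linarith
  have hτL : τ * L ≤ 1 := by
    rw [← le_div_iff₀ hL] at *
    linarith [hτ]
  -- θ facts
  have hθpos : ∀ k : ℕ, 0 < θ k := by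
    intro k; rw [hθ]; positivity
  have hθ0 : θ 0 = 1 := by rw [hθ]; norm_num
  have hθle1 : ∀ k : ℕ, θ k ≤ 1 := by
    intro k; rw [hθ, div_le_one (by positivity)]
    have : (0:ℝ) ≤ (k:ℝ) := Nat.cast_nonneg k
    linarith
  -- the auxiliary sequence v
  set v : ℕ → E m := fun k => (θ k)⁻¹ • (ty k - (1 - θ k) • y k) with hvdef
  have hv0 : v 0 = y 0 := by
    simp [hvdef, hθ0, h0]
  have hvsmul : ∀ k, θ k • v k = ty k - (1 - θ k) • y k := by
    intro k
    rw [hvdef]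
    exact smul_inv_smul₀ (ne_of_gt (hθpos k)) _
  have hvrec : ∀ k, θ k • v (k + 1) = y (k + 1) - (1 - θ k) • y k := by
    intro k
    have hne : θ k ≠ 0 := ne_of_gt (hθpos k)
    have hne1 : θ (k+1) ≠ 0 := ne_of_gt (hθpos (k+1))
    show θ k • (θ (k+1))⁻¹ • (ty (k+1) - (1 - θ (k+1)) • y (k+1)) = _
    rw [hty k, hα k]
    match_scalars <;> field_simp <;> ring
  clear_value v
  -- one-step inequality
  have hstep : ∀ k, G (y (k+1)) - G ystar ≤ (1 - θ k) * (G (y k) - G ystar)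
      + (θ k)^2 * (1/(2*τ)) * (‖v k - ystar‖^2 - ‖v (k+1) - ystar‖^2) := by
    intro k
    set z := (1 - θ k) • y k + θ k • ystar with hz
    have hkey := key_step G g L τ hconv hgrad hlip hτ0 hτL hL.le (ty k) z
    rw [← hy k] at hkey
    have e1 : ty k - z = θ k • (v k - ystar) := by
      rw [smul_sub, hvsmul k, hz]; abel
    have e2 : y (k+1) - z = θ k • (v (k+1) - ystar) := by
      rw [smul_sub, hvrec k, hz]; abel
    rw [e1, e2] at hkey
    have e3 : ∀ w : E m, ‖θ k • w‖^2 = (θ k)^2 * ‖w‖^2 := by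
      intro w; rw [norm_smul, mul_pow, Real.norm_eq_abs, sq_abs]
    rw [e3, e3] at hkey
    have hGz : G z ≤ (1 - θ k) * G (y k) + θ k * G ystar := by
      have := hconv.2 (Set.mem_univ (y k)) (Set.mem_univ ystar)
        (by linarith [hθle1 k] : (0:ℝ) ≤ 1 - θ k) (hθpos k).le (by ring)
      simpa [hz] using this
    have hre : 1/(2*τ) * ((θ k)^2 * ‖v k - ystar‖^2 - (θ k)^2 * ‖v (k+1) - ystar‖^2)
        = (θ k)^2 * (1/(2*τ)) * (‖v k - ystar‖^2 - ‖v (k+1) - ystar‖^2) := by ring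
    rw [hre] at hkey
    linarith [hkey, hGz]
  -- induction on the potential
  have hind : ∀ k, G (y (k+1)) - G ystar + (θ k)^2 * (1/(2*τ)) * ‖v (k+1) - ystar‖^2
      ≤ (θ k)^2 * (1/(2*τ)) * ‖ystar - y 0‖^2 := by
    intro k
    induction k with
    | zero =>
      have h := hstep 0
      have hnorm : ‖v 0 - ystar‖^2 = ‖ystar - y 0‖^2 := by rw [hv0, norm_sub_rev]
      rw [hθ0, hnorm] at h
      rw [hθ0]
      linarith [h]
    | succ k ih =>
      have h := hstep (k+1)
      have hδ : 0 ≤ G (y (k+1)) - G ystar := sub_nonneg.mpr (hmin _)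
      have hratio : (1 - θ (k+1)) * (θ k)^2 ≤ (θ (k+1))^2 := by
        rw [hθ, hθ]
        push_cast
        have hn : (0:ℝ) ≤ (k:ℝ) := Nat.cast_nonneg k
        have l1 : (1 - 2/((k:ℝ)+1+2)) * (2/((k:ℝ)+2))^2
            = (4*((k:ℝ)+1)) / (((k:ℝ)+3)*((k:ℝ)+2)^2) := by
          field_simp
          ring
        have l2 : (2/((k:ℝ)+1+2))^2 = 4/(((k:ℝ)+3))^2 := by
          rw [show (k:ℝ)+1+2 = (k:ℝ)+3 by ring, div_pow]
          norm_num
        rw [l1, l2, div_le_div_iff₀ (by positivity) (by positivity)]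
        nlinarith
      have hθ1 : 0 ≤ 1 - θ (k+1) := by linarith [hθle1 (k+1)]
      have hP : 0 ≤ 1/(2*τ) * ‖ystar - y 0‖^2 - 1/(2*τ) * ‖v (k+1) - ystar‖^2 := by
        have h1 : 0 ≤ (θ k)^2 * (1/(2*τ) * ‖ystar - y 0‖^2
            - 1/(2*τ) * ‖v (k+1) - ystar‖^2) := by
          nlinarith [ih, hδ]
        by_contra hc
        push_neg at hc
        nlinarith [pow_pos (hθpos k) 2]
      have hmain : (1 - θ (k+1)) * (G (y (k+1)) - G ystar)
          ≤ (θ (k+1))^2 * (1/(2*τ) * ‖ystar - y 0‖^2 - 1/(2*τ) * ‖v (k+1) - ystar‖^2) := by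
        have s1 : (1 - θ (k+1)) * (G (y (k+1)) - G ystar)
            ≤ (1 - θ (k+1)) * ((θ k)^2
              * (1/(2*τ) * ‖ystar - y 0‖^2 - 1/(2*τ) * ‖v (k+1) - ystar‖^2)) := by
          apply mul_le_mul_of_nonneg_left _ hθ1
          nlinarith [ih]

        have s2 : (1 - θ (k+1)) * ((θ k)^2
              * (1/(2*τ) * ‖ystar - y 0‖^2 - 1/(2*τ) * ‖v (k+1) - ystar‖^2))
            ≤ (θ (k+1))^2 * (1/(2*τ) * ‖ystar - y 0‖^2 - 1/(2*τ) * ‖v (k+1) - ystar‖^2) := by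
          rw [← mul_assoc]
          exact mul_le_mul_of_nonneg_right hratio hP
        linarith
      nlinarith [h, hmain]
  -- conclusion
  intro k hk
  obtain ⟨j, rfl⟩ : ∃ j, k = j + 1 := ⟨k - 1, (Nat.succ_pred_eq_of_pos hk).symm⟩
  have h := hind j
  have hB : 0 ≤ (θ j)^2 * (1/(2*τ)) * ‖v (j+1) - ystar‖^2 := by positivity
  have h2 : G (y (j+1)) - G ystar ≤ (θ j)^2 * (1/(2*τ)) * ‖ystar - y 0‖^2 := by linarith
  rw [hθ] at h2
  refine h2.trans ?_
  push_cast
  have hN : (0:ℝ) ≤ ‖ystar - y 0‖^2 := sq_nonneg _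
  have e : (2/((j:ℝ)+2))^2 * (1/(2*τ)) * ‖ystar - y 0‖^2
      = 2 * ‖ystar - y 0‖^2 / (τ*((j:ℝ)+2)^2) := by
    field_simp
  rw [e]
  have hn : (0:ℝ) ≤ (j:ℝ) := Nat.cast_nonneg j
  gcongr
  all_goals nlinarith [Nat.cast_nonneg (α := ℝ) j]
end

section
/- Let G be convex and differentiable with L-Lipschitz gradient, 0 < τ ≤ 1/L, θ_k = 2/(k+2), z^k = y^{k-1} + θ_{k-1}^{-1}(y^k - y^{k-1}). Then the accelerated gradient iteration satisfies the one-step estimate G(y^{k+1}) ≤ (1-θ_k)G(y^k) + θ_k G(y*) + (θ_k²/(2τ))‖y* - z^k‖² - (θ_k²/(2τ))‖y* - z^{k+1}‖², where y* is any minimizer of G. -/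
open RealInnerProductSpace Set

lemma line_hasDerivAt {m : ℕ} {G : E m → ℝ} {g : E m → E m}
    (hgrad : ∀ y, HasGradientAt G (g y) y) (x v : E m) (t : ℝ) :
    HasDerivAt (fun s : ℝ => G (x + s • v)) ⟪g (x + t • v), v⟫ t := by
  have h1 : HasDerivAt (fun s : ℝ => x + s • v) v t := by
    simpa using ((hasDerivAt_id t).smul_const v).const_add x
  have h2 := (hasGradientAt_iff_hasFDerivAt.mp (hgrad (x + t • v)))
  have h3 := h2.comp_hasDerivAt t h1
  simpa only [Function.comp_def, InnerProductSpace.toDual_apply_apply] using h3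

lemma subgrad_ineq {m : ℕ} {G : E m → ℝ} {g : E m → E m}
    (hconv : ConvexOn ℝ Set.univ G) (hgrad : ∀ y, HasGradientAt G (g y) y)
    (x w : E m) : G x + ⟪g x, w - x⟫ ≤ G w := by
  set v := w - x with hv
  have hc : ConvexOn ℝ Set.univ (fun t : ℝ => G (x + t • v)) := by
    have h := hconv.comp_affineMap (AffineMap.lineMap x w)
    have he : (G ∘ (AffineMap.lineMap x w)) = fun t : ℝ => G (x + t • v) := by
      funext t
      simp only [Function.comp, AffineMap.lineMap_apply_module, hv]
      congr 1
      module
    rw [Set.preimage_univ, he] at h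
    exact h
  have hd := line_hasDerivAt hgrad x v 0
  rw [zero_smul, add_zero] at hd
  have hslope := hc.le_slope_of_hasDerivAt (mem_univ (0:ℝ)) (mem_univ (1:ℝ)) zero_lt_one hd
  have hs : slope (fun t : ℝ => G (x + t • v)) 0 1 = G w - G x := by
    rw [slope_def_field]
    rw [show x + (1:ℝ) • v = w by rw [one_smul, hv]; abel]
    rw [show x + (0:ℝ) • v = x by rw [zero_smul, add_zero]]
    ring
  rw [hs] at hslope
  linarith

lemma descent_ineq {m : ℕ} {G : E m → ℝ} {g : E m → E m} {L : ℝ}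
    (hgrad : ∀ y, HasGradientAt G (g y) y)
    (hlip : ∀ y₁ y₂ : E m, ‖g y₁ - g y₂‖ ≤ L * ‖y₁ - y₂‖)
    (x w : E m) :
    G w ≤ G x + ⟪g x, w - x⟫ + L / 2 * ‖w - x‖ ^ 2 := by
  set v := w - x with hv
  set c : ℝ := ⟪g x, v⟫ with hc
  set b : ℝ := L / 2 * ‖v‖ ^ 2 with hb
  set ψ : ℝ → ℝ := fun t => G (x + t • v) - c * t - b * t ^ 2 with hψ
  have hψd : ∀ t : ℝ, HasDerivAt ψ (⟪g (x + t • v), v⟫ - c - b * (2 * t)) t := by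
    intro t
    have h1 := line_hasDerivAt hgrad x v t
    have h2 : HasDerivAt (fun s : ℝ => c * s) c t := by
      simpa using (hasDerivAt_id t).const_mul c
    have h3 : HasDerivAt (fun s : ℝ => b * s ^ 2) (b * (2 * t)) t := by
      simpa [mul_comm] using (hasDerivAt_pow 2 t).const_mul b
    exact (h1.sub h2).sub h3
  have hdiff : Differentiable ℝ ψ := fun t => (hψd t).differentiableAt
  have hanti : AntitoneOn ψ (Icc 0 1) := by
    apply antitoneOn_of_deriv_nonpos (convex_Icc 0 1) hdiff.continuous.continuousOn
      (fun t _ => (hdiff t).differentiableWithinAt)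
    intro t ht
    rw [interior_Icc] at ht
    rw [(hψd t).deriv]
    have h1 : ⟪g (x + t • v), v⟫ - c = ⟪g (x + t • v) - g x, v⟫ := by
      rw [hc, inner_sub_left]
    have h2 := real_inner_le_norm (g (x + t • v) - g x) v
    have h3 := hlip (x + t • v) x
    have h4 : ‖x + t • v - x‖ = t * ‖v‖ := by
      rw [add_sub_cancel_left, norm_smul, Real.norm_eq_abs, abs_of_pos ht.1]
    rw [h4] at h3
    have h5 := mul_le_mul_of_nonneg_right h3 (norm_nonneg v)
    have h6 : b * (2 * t) = L * (t * ‖v‖) * ‖v‖ := by rw [hb]; ring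
    linarith
  have h01 := hanti (left_mem_Icc.mpr zero_le_one) (right_mem_Icc.mpr zero_le_one) zero_le_one
  have e0 : ψ 0 = G x := by simp [hψ]
  have e1 : ψ 1 = G w - c - b := by
    have h7 : x + (1:ℝ) • v = w := by rw [one_smul, hv]; abel
    simp only [hψ, h7, one_pow, mul_one]
  rw [e0, e1] at h01
  linarith

theorem accelerated_gradient_one_step {m : ℕ}
    (G : E m → ℝ) (g : E m → E m) (L τ : ℝ)
    (hconv : ConvexOn ℝ Set.univ G)
    (hgrad : ∀ y, HasGradientAt G (g y) y)
    (hlip : ∀ y₁ y₂ : E m, ‖g y₁ - g y₂‖ ≤ L * ‖y₁ - y₂‖)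
    (ystar : E m) (hmin : ∀ y, G ystar ≤ G y)
    (hτ0 : 0 < τ) (hτ : τ ≤ 1 / L)
    (θ α : ℕ → ℝ)
    (hθ : ∀ k : ℕ, θ k = 2 / ((k : ℝ) + 2))
    (hα : ∀ k : ℕ, α k = 1 + θ (k + 1) * ((θ k)⁻¹ - 1))
    (y ty z : ℕ → E m) (h0 : ty 0 = y 0)
    (hy : ∀ k, y (k + 1) = ty k - τ • g (ty k))
    (hty : ∀ k, ty (k + 1) = α k • y (k + 1) + (1 - α k) • y k)
    (hz0 : z 0 = y 0)
    (hz : ∀ k, z (k + 1) = y k + (θ k)⁻¹ • (y (k + 1) - y k)) :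
    ∀ k : ℕ,
      G (y (k + 1)) ≤ (1 - θ k) * G (y k) + θ k * G ystar +
        (θ k ^ 2 / (2 * τ)) * ‖ystar - z k‖ ^ 2 -
        (θ k ^ 2 / (2 * τ)) * ‖ystar - z (k + 1)‖ ^ 2 := by
  have hL : 0 < L := by
    by_contra h
    push_neg at h
    have := hτ.trans (one_div_nonpos.mpr h)
    linarith
  have hτne : τ ≠ 0 := hτ0.ne'
  have hθpos : ∀ j : ℕ, 0 < θ j := by
    intro j; rw [hθ]; positivity
  have hθnz : ∀ j : ℕ, θ j ≠ 0 := fun j => (hθpos j).ne'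
  have hθ1 : ∀ j : ℕ, θ j ≤ 1 := by
    intro j; rw [hθ]
    rw [div_le_one (by positivity)]
    have : (0:ℝ) ≤ (j:ℝ) := Nat.cast_nonneg j
    linarith
  intro k
  -- the key structural identity: ty k = (1 - θ k) • y k + θ k • z k
  have htyk : ty k = (1 - θ k) • y k + θ k • z k := by
    cases k with
    | zero =>
      rw [h0, hz0, hθ 0]
      norm_num
    | succ n =>
      rw [hty n, hz n, hα n]
      match_scalars <;> field_simp [hθnz n] <;> ring
  set v := g (ty k) with hv
  have hLτ : L * τ ≤ 1 := by
    have h := (le_div_iff₀ hL).mp hτ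
    linarith
  have hz1 : z (k + 1) = z k - (τ / θ k) • v := by
    rw [hz k, hy k, show g (ty k) = v from hv.symm, htyk]
    match_scalars <;> field_simp [hθnz k] <;> ring
  -- descent lemma
  have hd := descent_ineq hgrad hlip (ty k) (y (k+1))
  rw [← hv] at hd
  have hd1 : y (k+1) - ty k = -(τ • v) := by rw [hy k, ← hv]; abel
  rw [hd1] at hd
  have hd2 : ⟪v, -(τ • v)⟫ = -(τ * ‖v‖^2) := by
    rw [inner_neg_right, real_inner_smul_right, real_inner_self_eq_norm_sq]
  have hd3 : ‖-(τ • v)‖^2 = τ^2 * ‖v‖^2 := by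
    rw [norm_neg, norm_smul, Real.norm_eq_abs, mul_pow, sq_abs]
  rw [hd2, hd3] at hd
  have hquad : L / 2 * (τ^2 * ‖v‖^2) ≤ τ / 2 * ‖v‖^2 := by
    nlinarith [sq_nonneg ‖v‖, hτ0]
  -- convexity inequalities
  have hA := subgrad_ineq hconv hgrad (ty k) (y k)
  have hB := subgrad_ineq hconv hgrad (ty k) ystar
  rw [← hv] at hA hB
  have p1 := mul_le_mul_of_nonneg_left
    (show G (ty k) ≤ G (y k) - ⟪v, y k - ty k⟫ by linarith)
    (show (0:ℝ) ≤ 1 - θ k by linarith [hθ1 k])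
  have p2 := mul_le_mul_of_nonneg_left
    (show G (ty k) ≤ G ystar - ⟪v, ystar - ty k⟫ by linarith)
    (hθpos k).le
  -- inner product expansions
  have i1 : ⟪v, y k - ty k⟫ = θ k * ⟪v, y k⟫ - θ k * ⟪v, z k⟫ := by
    rw [inner_sub_right, htyk, inner_add_right, real_inner_smul_right,
      real_inner_smul_right]
    ring
  have i2 : ⟪v, ystar - ty k⟫ = ⟪v, ystar⟫ - (1 - θ k) * ⟪v, y k⟫ - θ k * ⟪v, z k⟫ := by
    rw [inner_sub_right, htyk, inner_add_right, real_inner_smul_right,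
      real_inner_smul_right]
    ring
  have i3 : ‖ystar - z (k+1)‖^2 = ‖ystar - z k‖^2
      + 2 * (τ / θ k) * (⟪v, ystar⟫ - ⟪v, z k⟫) + (τ / θ k)^2 * ‖v‖^2 := by
    rw [hz1, show ystar - (z k - (τ / θ k) • v) = (ystar - z k) + (τ / θ k) • v by module,
      norm_add_sq_real, real_inner_smul_right, norm_smul, Real.norm_eq_abs, mul_pow, sq_abs]
    rw [show ⟪ystar - z k, v⟫ = ⟪v, ystar⟫ - ⟪v, z k⟫ by
      rw [real_inner_comm, inner_sub_right]]
    ring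
  have key : -((1 - θ k) * ⟪v, y k - ty k⟫) - θ k * ⟪v, ystar - ty k⟫ - (τ/2) * ‖v‖^2
      = (θ k ^ 2 / (2 * τ)) * ‖ystar - z k‖ ^ 2
        - (θ k ^ 2 / (2 * τ)) * ‖ystar - z (k+1)‖ ^ 2 := by
    rw [i1, i2, i3]
    field_simp [hθnz k]
    ring
  linarith [hd, hquad, p1, p2, key]
end

section
/- Let J be convex and μ > 0. The sequences {x^k} generated by the linearized Bregman method (x⁰ = p⁰ = 0; x^{k+1} = argmin_x { J(x) - ⟨p^k, x⟩ + τ⟨Aᵀ(Ax^k - b), x⟩ + (1/(2μ))‖x - x^k‖² }; p^{k+1} = p^k - τAᵀ(Ax^k - b) - (1/μ)(x^{k+1} - x^k)) and {w^k} generated by the dual gradient method (y⁰ = τb; w^{k+1} = argmin_w { J(w) + (1/(2μ))‖w‖² - ⟨y^k, Aw - b⟩ }; y^{k+1} = y^k - τ(Aw^{k+1} - b)) coincide: x^k = w^k for all k ≥ 1. -/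
open scoped RealInnerProductSpace

theorem linearized_bregman_eq_dual_gradient {m n : ℕ}
    (J : E n → ℝ) (hJ : ConvexOn ℝ Set.univ J)
    (A : E n →L[ℝ] E m) (b : E m) (μ τ : ℝ) (hμ : 0 < μ) (hτ : 0 < τ)
    (x p w : ℕ → E n) (y : ℕ → E m)
    (hx0 : x 0 = 0) (hp0 : p 0 = 0) (hy0 : y 0 = τ • b)
    (hxmin : ∀ k, ∀ u : E n,
      J (x (k + 1)) - ⟪p k, x (k + 1)⟫ +
          τ * ⟪(ContinuousLinearMap.adjoint A) (A (x k) - b), x (k + 1)⟫ +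
          (1 / (2 * μ)) * ‖x (k + 1) - x k‖ ^ 2 ≤
        J u - ⟪p k, u⟫ +
          τ * ⟪(ContinuousLinearMap.adjoint A) (A (x k) - b), u⟫ +
          (1 / (2 * μ)) * ‖u - x k‖ ^ 2)
    (hxuniq : ∀ k, ∀ u : E n,
      (∀ v : E n,
        J u - ⟪p k, u⟫ +
            τ * ⟪(ContinuousLinearMap.adjoint A) (A (x k) - b), u⟫ +
            (1 / (2 * μ)) * ‖u - x k‖ ^ 2 ≤
          J v - ⟪p k, v⟫ +
            τ * ⟪(ContinuousLinearMap.adjoint A) (A (x k) - b), v⟫ +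
            (1 / (2 * μ)) * ‖v - x k‖ ^ 2) → u = x (k + 1))
    (hp : ∀ k, p (k + 1) = p k - τ • (ContinuousLinearMap.adjoint A) (A (x k) - b)
      - μ⁻¹ • (x (k + 1) - x k))
    (hwmin : ∀ k, ∀ u : E n,
      J (w (k + 1)) + (1 / (2 * μ)) * ‖w (k + 1)‖ ^ 2 - ⟪y k, A (w (k + 1)) - b⟫ ≤
        J u + (1 / (2 * μ)) * ‖u‖ ^ 2 - ⟪y k, A u - b⟫)
    (hwuniq : ∀ k, ∀ u : E n,
      (∀ v : E n,
        J u + (1 / (2 * μ)) * ‖u‖ ^ 2 - ⟪y k, A u - b⟫ ≤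
          J v + (1 / (2 * μ)) * ‖v‖ ^ 2 - ⟪y k, A v - b⟫) → u = w (k + 1))
    (hy : ∀ k, y (k + 1) = y k - τ • (A (w (k + 1)) - b)) :
    ∀ k : ℕ, 1 ≤ k → x k = w k := by
  -- the key invariant and a step lemma
  have step : ∀ k : ℕ,
      (ContinuousLinearMap.adjoint A) (y k)
        = p k - τ • (ContinuousLinearMap.adjoint A) (A (x k) - b) + μ⁻¹ • x k →
      x (k + 1) = w (k + 1) := by
    intro k hinv
    apply hwuniq k (x (k + 1))
    have hobj : ∀ v : E n,
        J v + (1 / (2 * μ)) * ‖v‖ ^ 2 - ⟪y k, A v - b⟫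
          = (J v - ⟪p k, v⟫ +
              τ * ⟪(ContinuousLinearMap.adjoint A) (A (x k) - b), v⟫ +
              (1 / (2 * μ)) * ‖v - x k‖ ^ 2)
            + (⟪y k, b⟫ - (1 / (2 * μ)) * ‖x k‖ ^ 2) := by
      intro v
      have h1 : ⟪y k, A v⟫ = ⟪(ContinuousLinearMap.adjoint A) (y k), v⟫ :=
        (ContinuousLinearMap.adjoint_inner_left A v (y k)).symm
      have h2 : ‖v - x k‖ ^ 2 = ‖v‖ ^ 2 - 2 * ⟪v, x k⟫ + ‖x k‖ ^ 2 :=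
        norm_sub_sq_real v (x k)
      rw [inner_sub_right, h1, hinv, inner_add_left, inner_sub_left,
        real_inner_smul_left, real_inner_smul_left, h2, real_inner_comm (x k) v]
      field_simp
      ring
    intro v
    calc J (x (k+1)) + (1 / (2 * μ)) * ‖x (k+1)‖ ^ 2 - ⟪y k, A (x (k+1)) - b⟫
        = (J (x (k+1)) - ⟪p k, x (k+1)⟫ +
            τ * ⟪(ContinuousLinearMap.adjoint A) (A (x k) - b), x (k+1)⟫ +
            (1 / (2 * μ)) * ‖x (k+1) - x k‖ ^ 2)
          + (⟪y k, b⟫ - (1 / (2 * μ)) * ‖x k‖ ^ 2) := hobj _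
      _ ≤ (J v - ⟪p k, v⟫ +
            τ * ⟪(ContinuousLinearMap.adjoint A) (A (x k) - b), v⟫ +
            (1 / (2 * μ)) * ‖v - x k‖ ^ 2)
          + (⟪y k, b⟫ - (1 / (2 * μ)) * ‖x k‖ ^ 2) := by
            exact add_le_add_left (hxmin k v) _
      _ = J v + (1 / (2 * μ)) * ‖v‖ ^ 2 - ⟪y k, A v - b⟫ := (hobj v).symm
  have inv : ∀ k : ℕ,
      (ContinuousLinearMap.adjoint A) (y k)
        = p k - τ • (ContinuousLinearMap.adjoint A) (A (x k) - b) + μ⁻¹ • x k := by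
    intro k
    induction k with
    | zero =>
      simp [hx0, hp0, hy0, map_smul]
    | succ k ih =>
      have hxw := step k ih
      rw [hy k, ← hxw, map_sub, map_smul, ih, hp k]
      module
  intro k hk
  obtain ⟨j, rfl⟩ := Nat.exists_eq_add_of_le hk
  simpa [Nat.add_comm] using step j (inv j)
end
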